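/- Let Λ be a Coxeter diagram on vertex set S with Artin group A_Λ. Let S₁, S₂, S₃ ⊆ S and g₁, g₂, g₃ ∈ A_Λ. Suppose that for every s₁ ∈ S₁∖S₂ and every s₃ ∈ S₃∖S₂, the vertices s₁ and s₃ lie in distinct connected components of the subdiagram of Λ induced on S∖S₂ (whose edges are the pairs with label ≥ 3). If g₁·A_{S∖S₁} ∩ g₂·A_{S∖S₂} ≠ ∅ and g₂·A_{S∖S₂} ∩ g₃·A_{S∖S₃} ≠ ∅, then g₁·A_{S∖S₁} ∩ g₃·A_{S∖S₃} ≠ ∅. -/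

import Mathlib

open scoped Pointwise

namespace ArtinKpi1

/-- The alternating word `s t s t ⋯` of length `m`, as an element of the free group. -/
def altWord {S : Type*} (s t : S) (m : ℕ) : FreeGroup S :=
  ((List.range m).map fun i => FreeGroup.of (if i % 2 = 0 then s else t)).prod

/-- The braid/Artin relations associated to a Coxeter matrix (the entry `0` encodes `∞`,
in which case there is no relation for the corresponding pair of generators). -/
def artinRelationsSet {S : Type*} (M : CoxeterMatrix S) : Set (FreeGroup S) :=
  {r | ∃ s t : S, s ≠ t ∧ M s t ≠ 0 ∧ r = altWord s t (M s t) * (altWord t s (M s t))⁻¹}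

/-- The Artin group of a Coxeter diagram. -/
abbrev ArtinGroup {S : Type*} (M : CoxeterMatrix S) : Type _ :=
  PresentedGroup (artinRelationsSet M)

/-- The standard generators of the Artin group. -/
def agen {S : Type*} (M : CoxeterMatrix S) (s : S) : ArtinGroup M :=
  PresentedGroup.of s

/-- The standard parabolic subgroup `A_T` of the Artin group. -/
def parabolic {S : Type*} (M : CoxeterMatrix S) (T : Set S) : Subgroup (ArtinGroup M) :=
  Subgroup.closure (agen M '' T)

/-- The left coset `g • A_T` of a standard parabolic subgroup, as a set. -/
def parCoset {S : Type*} (M : CoxeterMatrix S) (T : Set S) (g : ArtinGroup M) :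
    Set (ArtinGroup M) :=
  g • (parabolic M T : Set (ArtinGroup M))

/-- `X` is a vertex of type `ŝ` of the Artin complex of `M`:
a left coset of `A_{S ∖ {s}}`. -/
def IsVertexOfType {S : Type*} (M : CoxeterMatrix S) (s : S) (X : Set (ArtinGroup M)) : Prop :=
  ∃ g : ArtinGroup M, X = parCoset M {t | t ≠ s} g

/-- Adjacency of vertices of the Artin complex: the two cosets are distinct and intersect. -/
def VAdj {S : Type*} (M : CoxeterMatrix S) (X Y : Set (ArtinGroup M)) : Prop :=
  X ≠ Y ∧ (X ∩ Y).Nonempty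

/-- The coset graph `Δ_{Λ,st}`: vertices are the left cosets of `A_{ŝ}` and of `A_{t̂}`,
two of them being adjacent when they intersect. -/
def DeltaEdge {S : Type*} (M : CoxeterMatrix S) (s t : S) :
    SimpleGraph {X : Set (ArtinGroup M) // IsVertexOfType M s X ∨ IsVertexOfType M t X} where
  Adj X Y := X.1 ≠ Y.1 ∧ (X.1 ∩ Y.1).Nonempty
  symm := by
    constructor
    rintro X Y ⟨h1, h2⟩
    exact ⟨h1.symm, by rwa [Set.inter_comm]⟩
  loopless := by constructor; rintro X ⟨h1, _⟩; exact h1 rfl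

/-- `s t` is an edge of the Coxeter diagram: the label is at least `3`
(where the label `0` encodes `∞`). -/
def IsEdge {S : Type*} (M : CoxeterMatrix S) (s t : S) : Prop :=
  s ≠ t ∧ (M s t = 0 ∨ 3 ≤ M s t)

/-- `Λ` satisfies the girth condition: for every edge `st` of `Λ`, the graph `Δ_{Λ,st}`
has girth at least `6`, i.e. it has no cycle on `3`, `4` or `5` distinct vertices. -/
def GirthCondition {S : Type*} (M : CoxeterMatrix S) : Prop :=
  ∀ s t : S, IsEdge M s t → 6 ≤ (DeltaEdge M s t).egirth

/-- The restriction of a Coxeter matrix to a subset of the vertices (an induced subdiagram). -/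
def restrictSet {S : Type*} (M : CoxeterMatrix S) (T : Set S) : CoxeterMatrix T where
  M := Matrix.of fun a b => M a b
  isSymm := Matrix.IsSymm.ext fun a b => M.symmetric b a
  diagonal := fun a => M.diagonal a
  off_diagonal := fun a b h => M.off_diagonal a b fun he => h (Subtype.ext he)

/-- A subset `T` of the vertices is spherical if the Coxeter group of the induced
subdiagram is finite. -/
def IsSpherical {S : Type*} (M : CoxeterMatrix S) (T : Set S) : Prop :=
  Finite (restrictSet M T).Group


/-- The subdiagram of the Coxeter diagram induced on a subset `T` of the vertices, viewed
as a simple graph: two vertices are adjacent iff their label is at least `3` (where `0`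
encodes `∞`). -/
def diagramGraph {S : Type*} (M : CoxeterMatrix S) (T : Set S) : SimpleGraph T where
  Adj a b := a ≠ b ∧ (M a b = 0 ∨ 3 ≤ M a b)
  symm := by
    constructor
    rintro a b ⟨hab, h⟩
    exact ⟨hab.symm, by rwa [M.symmetric b a]⟩
  loopless := by constructor; rintro a ⟨h, _⟩; exact h rfl

section Aux

variable {G : Type*} [Group G]

lemma commute_of_closures {A B : Set G} (h : ∀ a ∈ A, ∀ b ∈ B, Commute a b)
    {x y : G} (hx : x ∈ Subgroup.closure A) (hy : y ∈ Subgroup.closure B) : Commute x y := by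
  have H : ∀ x ∈ Subgroup.closure A, ∀ y ∈ Subgroup.closure B, Commute x y := by
    intro x hx
    refine Subgroup.closure_induction (p := fun x _ => ∀ y ∈ Subgroup.closure B, Commute x y)
      (fun a ha y hy => ?_) (fun y _ => Commute.one_left y)
      (fun u v _ _ hu hv y hy => (hu y hy).mul_left (hv y hy))
      (fun u _ hu y hy => (hu y hy).inv_left) hx
    exact Subgroup.closure_induction (p := fun y _ => Commute a y)
      (fun b hb => h a ha b hb) (Commute.one_right a)
      (fun u v _ _ hu hv => hu.mul_right hv) (fun u _ hu => hu.inv_right) hy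
  exact H x hx y hy

end Aux

/-- Generators with label `2` commute in the Artin group. -/
lemma agen_commute {S : Type*} (M : CoxeterMatrix S) {s t : S} (hst : s ≠ t)
    (h2 : M s t = 2) : Commute (agen M s) (agen M t) := by
  have hr : altWord s t (M s t) * (altWord t s (M s t))⁻¹ ∈ artinRelationsSet M :=
    ⟨s, t, hst, by omega, rfl⟩
  have h1 : (QuotientGroup.mk (altWord s t (M s t) * (altWord t s (M s t))⁻¹) :
      PresentedGroup (artinRelationsSet M)) = 1 := by
    rw [QuotientGroup.eq_one_iff]
    exact Subgroup.subset_normalClosure hr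
  have hw : ∀ a b : S, altWord a b 2 = FreeGroup.of a * FreeGroup.of b := by
    intro a b
    simp [altWord, List.range_succ]
  rw [h2, hw, hw] at h1
  have h1' : (QuotientGroup.mk (FreeGroup.of s * FreeGroup.of t) :
        PresentedGroup (artinRelationsSet M)) *
      (QuotientGroup.mk (FreeGroup.of t * FreeGroup.of s))⁻¹ = 1 := by
    rw [← QuotientGroup.mk_inv, ← QuotientGroup.mk_mul]; exact h1
  have heq := mul_inv_eq_one.mp h1'
  have hmk : ∀ a : S, agen M a = (QuotientGroup.mk (FreeGroup.of a) :
      PresentedGroup (artinRelationsSet M)) := fun a => rfl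
  show agen M s * agen M t = agen M t * agen M s
  rw [hmk, hmk]
  exact heq

/-- Let `S₁, S₂, S₃ ⊆ S` and `g₁, g₂, g₃ ∈ A_Λ`. If every
`s₁ ∈ S₁ ∖ S₂` and every `s₃ ∈ S₃ ∖ S₂` lie in distinct connected components of the
subdiagram of `Λ` induced on `S ∖ S₂`, and the cosets `g₁·A_{S∖S₁}` and `g₂·A_{S∖S₂}`
intersect, and the cosets `g₂·A_{S∖S₂}` and `g₃·A_{S∖S₃}` intersect, then the cosets
`g₁·A_{S∖S₁}` and `g₃·A_{S∖S₃}` intersect. -/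
theorem coset_intersection_transitive {S : Type*} (M : CoxeterMatrix S)
    (S₁ S₂ S₃ : Set S) (g₁ g₂ g₃ : ArtinGroup M)
    (hsep : ∀ s₁ (hs₁ : s₁ ∈ S₁ \ S₂) s₃ (hs₃ : s₃ ∈ S₃ \ S₂),
      ¬ (diagramGraph M S₂ᶜ).Reachable ⟨s₁, hs₁.2⟩ ⟨s₃, hs₃.2⟩)
    (h12 : (parCoset M S₁ᶜ g₁ ∩ parCoset M S₂ᶜ g₂).Nonempty)
    (h23 : (parCoset M S₂ᶜ g₂ ∩ parCoset M S₃ᶜ g₃).Nonempty) :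
    (parCoset M S₁ᶜ g₁ ∩ parCoset M S₃ᶜ g₃).Nonempty := by
  classical
  -- the part of `S ∖ S₂` reachable from `S₁ ∖ S₂`
  set T₁ : Set S := {s | ∃ (hs : s ∈ S₂ᶜ) (s₁ : S) (h₁ : s₁ ∈ S₁ \ S₂),
      (diagramGraph M S₂ᶜ).Reachable ⟨s₁, h₁.2⟩ ⟨s, hs⟩} with hT₁def
  set T₃ : Set S := S₂ᶜ \ T₁ with hT₃def
  have hT₁sub : T₁ ⊆ S₂ᶜ := fun s hs => hs.1
  have hT₁S₃ : T₁ ⊆ S₃ᶜ := by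
    rintro s ⟨hs, s₁, h₁, hr⟩ h3
    exact hsep s₁ h₁ s ⟨h3, hs⟩ hr
  have hT₃S₁ : T₃ ⊆ S₁ᶜ := by
    rintro s ⟨hs, hns⟩ h1
    exact hns ⟨hs, s, ⟨h1, hs⟩, SimpleGraph.Reachable.refl _⟩
  -- generators from `T₃` commute with generators from `T₁`
  have hcomm : ∀ a ∈ agen M '' T₃, ∀ b ∈ agen M '' T₁, Commute a b := by
    rintro _ ⟨s, hs, rfl⟩ _ ⟨t, ht, rfl⟩
    obtain ⟨hs2, hsnot⟩ := hs
    obtain ⟨ht2, t₁, h₁, hr⟩ := ht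
    have hne : s ≠ t := fun h => hsnot (h ▸ (⟨ht2, t₁, h₁, hr⟩ : t ∈ T₁))
    have hnadj : ¬ (diagramGraph M S₂ᶜ).Adj ⟨t, ht2⟩ ⟨s, hs2⟩ := by
      intro hadj
      exact hsnot ⟨hs2, t₁, h₁, hr.trans hadj.reachable⟩
    have h2 : M s t = 2 := by
      have hne1 : M s t ≠ 1 := M.off_diagonal s t hne
      have h3 : ¬ (M t s = 0 ∨ 3 ≤ M t s) := fun h =>
        hnadj ⟨fun he => hne (congrArg Subtype.val he).symm, h⟩
      rw [M.symmetric t s] at h3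
      omega
    exact agen_commute M hne h2
  -- decomposition of elements of `A_{S∖S₂}`
  have hdecomp : ∀ c ∈ parabolic M S₂ᶜ, ∃ u ∈ Subgroup.closure (agen M '' T₃),
      ∃ v ∈ Subgroup.closure (agen M '' T₁), c = u * v := by
    intro c hc
    refine Subgroup.closure_induction
      (p := fun c _ => ∃ u ∈ Subgroup.closure (agen M '' T₃),
        ∃ v ∈ Subgroup.closure (agen M '' T₁), c = u * v) ?_ ?_ ?_ ?_ hc
    · rintro _ ⟨s, hs, rfl⟩
      by_cases hsT : s ∈ T₁
      · exact ⟨1, one_mem _, agen M s, Subgroup.subset_closure ⟨s, hsT, rfl⟩,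
          (one_mul _).symm⟩
      · exact ⟨agen M s, Subgroup.subset_closure ⟨s, ⟨hs, hsT⟩, rfl⟩, 1, one_mem _,
          (mul_one _).symm⟩
    · exact ⟨1, one_mem _, 1, one_mem _, (one_mul 1).symm⟩
    · rintro x y _ _ ⟨u, hu, v, hv, rfl⟩ ⟨u', hu', v', hv', rfl⟩
      refine ⟨u * u', mul_mem hu hu', v * v', mul_mem hv hv', ?_⟩
      have h := (commute_of_closures hcomm hu' hv).symm.eq
      calc u * v * (u' * v') = u * (v * u') * v' := by group
        _ = u * (u' * v) * v' := by rw [h]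
        _ = u * u' * (v * v') := by group
    · rintro x _ ⟨u, hu, v, hv, rfl⟩
      refine ⟨u⁻¹, inv_mem hu, v⁻¹, inv_mem hv, ?_⟩
      have h := (commute_of_closures hcomm (inv_mem hu) (inv_mem hv)).eq
      rw [mul_inv_rev, h]
  obtain ⟨x, hx1, hx2⟩ := h12
  obtain ⟨y, hy2, hy3⟩ := h23
  rw [parCoset, Set.mem_smul_set_iff_inv_smul_mem, smul_eq_mul] at hx1 hx2 hy2 hy3
  have hc : x⁻¹ * y ∈ parabolic M S₂ᶜ := by
    have := mul_mem (inv_mem hx2) hy2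
    simpa [mul_assoc] using this
  obtain ⟨u, hu, v, hv, huv⟩ := hdecomp _ hc
  have hu' : u ∈ parabolic M S₁ᶜ :=
    Subgroup.closure_mono (Set.image_mono hT₃S₁) hu
  have hv' : v ∈ parabolic M S₃ᶜ :=
    Subgroup.closure_mono (Set.image_mono hT₁S₃) hv
  refine ⟨x * u, ?_, ?_⟩
  · rw [parCoset, Set.mem_smul_set_iff_inv_smul_mem, smul_eq_mul, ← mul_assoc]
    exact mul_mem hx1 hu'
  · have hz : x * u = y * v⁻¹ := by
      have hu2 : u = x⁻¹ * y * v⁻¹ := by rw [huv]; group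
      rw [hu2]; group
    rw [parCoset, Set.mem_smul_set_iff_inv_smul_mem, smul_eq_mul, hz, ← mul_assoc]
    exact mul_mem hy3 (inv_mem hv')

end ArtinKpi1
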